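/- Let f: ℝᵈ → ℝ be convex and differentiable with minimizer x* and minimum value f*. Then minimizing the upper bound on ‖x - η g‖², i.e., choosing η = (f(x) - f*)/‖∇f(x)‖² (the Polyak step size) for gradient descent x⁺ = x - η∇f(x) with ∇f(x) ≠ 0 yields ‖x⁺ - x*‖² ≤ ‖x - x*‖² - (f(x) - f*)²/‖∇f(x)‖². -/

import Mathlib

open scoped RealInnerProductSpace

/-- Polyak step size for gradient descent on a convex differentiable function:
one step decreases the squared distance to the minimizer by `(f x - f*)² / ‖∇f x‖²`. -/
theorem polyak_step_decrease
    {E : Type*} [NormedAddCommGroup E] [InnerProductSpace ℝ E]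
    (f : E → ℝ) (g : E → E)
    (hconv : ∀ y z : E, f y + ⟪g y, z - y⟫ ≤ f z)
    (xstar : E) (fstar : ℝ) (hfstar : fstar = f xstar)
    (hmin : ∀ y : E, f xstar ≤ f y)
    (x : E) (hg : g x ≠ 0)
    (η : ℝ) (hη : η = (f x - fstar) / ‖g x‖ ^ 2)
    (xplus : E) (hxplus : xplus = x - η • g x) :
    ‖xplus - xstar‖ ^ 2 ≤ ‖x - xstar‖ ^ 2 - (f x - fstar) ^ 2 / ‖g x‖ ^ 2 := by
  have hG : (0:ℝ) < ‖g x‖ ^ 2 := pow_pos (norm_pos_iff.mpr hg) 2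
  have ha : 0 ≤ f x - fstar := by rw [hfstar]; linarith [hmin x]
  have hinner : f x - fstar ≤ ⟪g x, x - xstar⟫ := by
    have := hconv x xstar
    rw [hfstar]
    have : ⟪g x, xstar - x⟫ = -⟪g x, x - xstar⟫ := by
      rw [← inner_neg_right]; congr 1; abel
    linarith [hconv x xstar, this ▸ hconv x xstar]
  have hexp : ‖xplus - xstar‖ ^ 2
      = ‖x - xstar‖ ^ 2 - 2 * η * ⟪g x, x - xstar⟫ + η ^ 2 * ‖g x‖ ^ 2 := by
    have h1 : xplus - xstar = (x - xstar) - η • g x := by rw [hxplus]; abel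
    rw [h1, norm_sub_sq_real, real_inner_smul_right, norm_smul, mul_pow, Real.norm_eq_abs, sq_abs,
      real_inner_comm]
    ring
  have hη0 : 0 ≤ η := by rw [hη]; positivity
  rw [hexp, hη]
  have key : (f x - fstar) / ‖g x‖ ^ 2 * ⟪g x, x - xstar⟫ ≥
      (f x - fstar) / ‖g x‖ ^ 2 * (f x - fstar) := by
    apply mul_le_mul_of_nonneg_left hinner (by positivity)
  have h2 : (f x - fstar) * (f x - fstar) ≤ (f x - fstar) * ⟪g x, x - xstar⟫ :=
    mul_le_mul_of_nonneg_left hinner ha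
  have h3 := mul_le_mul_of_nonneg_left h2
    (by positivity : (0:ℝ) ≤ ‖g x‖ ^ 2 * (‖g x‖ ^ 2) ^ 2)
  field_simp
  nlinarith [h3]
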